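/- For every natural number n ≥ 2, φ(n)² + ψ(n)² + σ(n)² ≥ 3n² + 2n + 3 and φ(n)ψ(n) + φ(n)σ(n) + σ(n)ψ(n) ≥ 3n² + 2n − 1. -/

import Mathlib

/-- The Dedekind psi function: ψ(p^a) = p^(a-1)(p+1), ψ(1) = 1, multiplicative. -/
def dpsi (n : ℕ) : ℕ := ∏ p ∈ n.primeFactors, p ^ (n.factorization p - 1) * (p + 1)

/-- Sum of divisors function. -/
def sigma1 (n : ℕ) : ℕ := ArithmeticFunction.sigma 1 n

lemma pow_pred_mul (p k : ℕ) (hk : 1 ≤ k) : p ^ (k - 1) * p = p ^ k := by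
  rw [← pow_succ]; congr 1; omega

lemma key_prod (s : Finset ℕ) (a b c : ℕ → ℕ)
    (hab : ∀ i ∈ s, a i + b i = 2 * c i) (hcb : ∀ i ∈ s, c i ≤ b i) :
    2 * ∏ i ∈ s, c i ≤ (∏ i ∈ s, a i) + ∏ i ∈ s, b i ∧
      (∏ i ∈ s, c i) ≤ ∏ i ∈ s, b i ∧ (∏ i ∈ s, a i) ≤ ∏ i ∈ s, c i := by
  classical
  induction s using Finset.induction_on with
  | empty => simp
  | insert j s hj ih =>
    have hab' : ∀ i ∈ s, a i + b i = 2 * c i := fun i hi => hab i (Finset.mem_insert_of_mem hi)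
    have hcb' : ∀ i ∈ s, c i ≤ b i := fun i hi => hcb i (Finset.mem_insert_of_mem hi)
    obtain ⟨h1, h2, h3⟩ := ih hab' hcb'
    have habj := hab j (Finset.mem_insert_self j s)
    have hcbj := hcb j (Finset.mem_insert_self j s)
    rw [Finset.prod_insert hj, Finset.prod_insert hj, Finset.prod_insert hj]
    set Pa := ∏ i ∈ s, a i
    set Pb := ∏ i ∈ s, b i
    set Pc := ∏ i ∈ s, c i
    refine ⟨?_, Nat.mul_le_mul hcbj h2, Nat.mul_le_mul (by omega) h3⟩
    obtain ⟨d, hd⟩ := Nat.exists_eq_add_of_le hcbj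
    have haj : a j + d = c j := by omega
    have e1 : c j * Pa = a j * Pa + d * Pa := by rw [← haj]; ring
    have e2 : b j * Pb = c j * Pb + d * Pb := by rw [hd]; ring
    have e3 : 2 * (c j * Pc) ≤ c j * Pa + c j * Pb := by
      calc 2 * (c j * Pc) = c j * (2 * Pc) := by ring
      _ ≤ c j * (Pa + Pb) := Nat.mul_le_mul_left _ h1
      _ = c j * Pa + c j * Pb := by ring
    have e4 : d * Pa ≤ d * Pb := Nat.mul_le_mul_left _ (h3.trans h2)
    omega

lemma prod_primeFactors_eq (n : ℕ) (hn : n ≠ 0) :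
    n = ∏ p ∈ n.primeFactors, p ^ (n.factorization p) := by
  conv_lhs => rw [← Nat.factorization_prod_pow_eq_self hn]
  rfl

lemma dpsi_plus_totient (n : ℕ) (hn : n ≠ 0) : 2 * n ≤ n.totient + dpsi n := by
  have h := key_prod n.primeFactors
    (fun p => p ^ (n.factorization p - 1) * (p - 1))
    (fun p => p ^ (n.factorization p - 1) * (p + 1))
    (fun p => p ^ (n.factorization p)) ?_ ?_
  · have hφ : n.totient = ∏ p ∈ n.primeFactors,
        p ^ (n.factorization p - 1) * (p - 1) := Nat.totient_eq_prod_factorization hn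
    rw [hφ, dpsi]
    calc 2 * n = 2 * ∏ p ∈ n.primeFactors, p ^ (n.factorization p) := by
          rw [← prod_primeFactors_eq n hn]
    _ ≤ _ := h.1
  · intro p hp
    have hprime := Nat.prime_of_mem_primeFactors hp
    have hk : 1 ≤ n.factorization p :=
      hprime.factorization_pos_of_dvd hn (Nat.dvd_of_mem_primeFactors hp)
    have hp2 : 2 ≤ p := hprime.two_le
    have hpp := pow_pred_mul p (n.factorization p) hk
    rw [← Nat.mul_add, show p - 1 + (p + 1) = 2 * p by omega,
      show p ^ (n.factorization p - 1) * (2 * p) = 2 * (p ^ (n.factorization p - 1) * p) by ring,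
      hpp]
  · intro p hp
    have hprime := Nat.prime_of_mem_primeFactors hp
    have hk : 1 ≤ n.factorization p :=
      hprime.factorization_pos_of_dvd hn (Nat.dvd_of_mem_primeFactors hp)
    have hpp := pow_pred_mul p (n.factorization p) hk
    calc p ^ (n.factorization p) = p ^ (n.factorization p - 1) * p := hpp.symm
    _ ≤ p ^ (n.factorization p - 1) * (p + 1) := Nat.mul_le_mul_left _ (by omega)

lemma dpsi_gt (n : ℕ) (hn : 2 ≤ n) : n + 1 ≤ dpsi n := by
  have hn0 : n ≠ 0 := by omega
  have hnn := prod_primeFactors_eq n hn0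
  have h : (∏ p ∈ n.primeFactors, p ^ (n.factorization p)) <
      ∏ p ∈ n.primeFactors, p ^ (n.factorization p - 1) * (p + 1) := by
    apply Finset.prod_lt_prod_of_nonempty
    · intro p hp
      exact Nat.pow_pos (Nat.prime_of_mem_primeFactors hp).pos
    · intro p hp
      have hprime := Nat.prime_of_mem_primeFactors hp
      have hk : 1 ≤ n.factorization p :=
        hprime.factorization_pos_of_dvd hn0 (Nat.dvd_of_mem_primeFactors hp)
      have hpp := pow_pred_mul p (n.factorization p) hk
      have hpos : 0 < p ^ (n.factorization p - 1) := Nat.pow_pos hprime.pos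
      calc p ^ (n.factorization p) = p ^ (n.factorization p - 1) * p := hpp.symm
      _ < p ^ (n.factorization p - 1) * (p + 1) := by
          exact mul_lt_mul_of_pos_left (by omega) hpos
    · exact Nat.nonempty_primeFactors.mpr hn
  rw [dpsi]; omega

lemma sigma1_ge_dpsi (n : ℕ) (hn : n ≠ 0) : dpsi n ≤ sigma1 n := by
  rw [sigma1, ArithmeticFunction.sigma_one_apply, Nat.sum_divisors hn, dpsi]
  apply Finset.prod_le_prod'
  intro p hp
  have hprime := Nat.prime_of_mem_primeFactors hp
  have hk : 1 ≤ n.factorization p :=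
    hprime.factorization_pos_of_dvd hn (Nat.dvd_of_mem_primeFactors hp)
  set k := n.factorization p with hkdef
  have hpp := pow_pred_mul p k hk
  have h1 : p ^ (k - 1) * (p + 1) = p ^ k + p ^ (k - 1) := by
    rw [Nat.mul_add, mul_one, hpp]
  rw [h1]
  have hsub : ({k - 1, k} : Finset ℕ) ⊆ Finset.range (k + 1) := by
    intro x hx
    simp only [Finset.mem_insert, Finset.mem_singleton] at hx
    rcases hx with h | h <;> simp [h] <;> omega
  have hpair : ∑ i ∈ ({k - 1, k} : Finset ℕ), p ^ i = p ^ (k - 1) + p ^ k := by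
    rw [Finset.sum_pair (by omega)]
  calc p ^ k + p ^ (k - 1) = ∑ i ∈ ({k - 1, k} : Finset ℕ), p ^ i := by rw [hpair]; ring
  _ ≤ ∑ i ∈ Finset.range (k + 1), p ^ i :=
      Finset.sum_le_sum_of_subset hsub

theorem stmt19 (n : ℕ) (hn : 2 ≤ n) :
    n.totient ^ 2 + dpsi n ^ 2 + sigma1 n ^ 2 ≥ 3 * n ^ 2 + 2 * n + 3 ∧
      n.totient * dpsi n + n.totient * sigma1 n + sigma1 n * dpsi n ≥ 3 * n ^ 2 + 2 * n - 1 := by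
  have hn0 : n ≠ 0 := by omega
  have h1 := dpsi_plus_totient n hn0
  have h2 := dpsi_gt n hn
  have h3 := sigma1_ge_dpsi n hn0
  have h4 : 1 ≤ n.totient := Nat.totient_pos.mpr (by omega)
  set P := n.totient
  set B := dpsi n
  set C := sigma1 n
  have hCB : B + 1 ≤ C + 1 := by omega
  constructor
  · rcases le_or_gt B (2 * n) with hB | hB
    · -- P ≥ 2n - B, and (2n-B)^2 + B^2 ≥ 2n^2+2 since B ≥ n+1, B ≤ 2n
      have hP : 2 * n - B ≤ P := by omega
      obtain ⟨e, he⟩ := Nat.exists_eq_add_of_le h2  -- B = n+1+e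
      have heB : e ≤ n - 1 := by omega
      have hP' : n - 1 - e ≤ P := by omega
      -- P^2 ≥ (n-1-e)^2 ; B^2 = (n+1+e)^2 ; C^2 ≥ B^2 ≥ (n+1)^2... need careful
      zify [hn] at *
      nlinarith [sq_nonneg ((B : ℤ) - n - 1), sq_nonneg ((P:ℤ)), sq_nonneg ((P:ℤ) + B - 2*n)]
    · zify at *
      nlinarith [sq_nonneg ((B:ℤ) - 2*n), sq_nonneg ((P:ℤ) - 1)]
  · have key : 3 * n ^ 2 + 2 * n ≤ P * B + P * C + C * B + 1 := by
      rcases le_or_gt B (2 * n) with hB | hB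
      · zify at *
        nlinarith [mul_nonneg (by linarith : (0:ℤ) ≤ (B:ℤ) - n - 1) (by linarith : (0:ℤ) ≤ 3*(n:ℤ) - 1 - B),
          mul_nonneg (by linarith : (0:ℤ) ≤ (P:ℤ)) (by linarith : (0:ℤ) ≤ (C:ℤ) - B),
          mul_nonneg (by linarith : (0:ℤ) ≤ (P:ℤ) + B - 2*n) (by linarith : (0:ℤ) ≤ (B:ℤ))]
      · zify at *
        nlinarith [mul_nonneg (by linarith : (0:ℤ) ≤ (P:ℤ)) (by linarith : (0:ℤ) ≤ (C:ℤ) - B),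
          mul_le_mul (le_refl ((B:ℤ))) (by linarith : (2*(n:ℤ) ≤ B)) (by linarith) (by linarith)]
    omega
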